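/- Let s ≥ 0. For any w ∈ H^r(𝕋) and v ∈ H^{r'}(𝕋) with 0 ≤ r ≤ s, 0 ≤ r' ≤ s, and 0 ≤ 2s - r - r' < 1/4, there is a constant c depending only on r, r', s such that ‖(1-∂x²)^{-1}∂x(wv)‖_{H^s} ≤ c ‖w‖_{H^r} ‖v‖_{H^{r'}}. -/

import Mathlib

private lemma base_ge_one (k : ℤ) : (1:ℝ) ≤ 1 + (k:ℝ)^2 := by nlinarith [sq_nonneg (k:ℝ)]

private lemma base_pos (k : ℤ) : (0:ℝ) < 1 + (k:ℝ)^2 := lt_of_lt_of_le one_pos (base_ge_one k)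

/-- Summability of `(1+k²)^e` over `ℤ` when `e < -1/2`. -/
private lemma summable_int_rpow {e : ℝ} (he : e < -(1/2)) :
    Summable (fun k : ℤ => (1 + (k:ℝ)^2) ^ e) := by
  have hnat : Summable (fun n : ℕ => (1 + (n:ℝ)^2) ^ e) := by
    have h1 : Summable (fun n : ℕ => ((n:ℝ)) ^ (2*e)) := Real.summable_nat_rpow.2 (by linarith)
    have h2 : Summable (fun n : ℕ => (((n+1:ℕ)):ℝ) ^ (2*e)) := (summable_nat_add_iff 1).2 h1
    refine Summable.of_nonneg_of_le (fun n => Real.rpow_nonneg (by positivity) e) ?_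
      (h2.mul_left ((2:ℝ) ^ (-e)))
    intro n
    have hb : (((n+1:ℕ)):ℝ) ^ (2*e) = (((n:ℝ)+1)^2) ^ e := by
      push_cast
      rw [← Real.rpow_natCast ((n:ℝ)+1) 2, ← Real.rpow_mul (by positivity)]
      ring_nf
    rw [hb]
    have hle : ((n:ℝ)+1)^2 ≤ 2 * (1 + (n:ℝ)^2) := by nlinarith [sq_nonneg ((n:ℝ)-1)]
    have h3 : (2 * (1 + (n:ℝ)^2)) ^ e ≤ (((n:ℝ)+1)^2) ^ e :=
      Real.rpow_le_rpow_of_nonpos (by positivity) hle (by linarith)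
    have h4 : (2 * (1 + (n:ℝ)^2)) ^ e = 2^e * (1 + (n:ℝ)^2)^e :=
      Real.mul_rpow (by norm_num) (by positivity)
    have h5 : (2:ℝ)^(-e) * (2^e * (1 + (n:ℝ)^2)^e) = (1 + (n:ℝ)^2)^e := by
      rw [← mul_assoc, ← Real.rpow_add (by norm_num)]
      simp
    calc (1 + (n:ℝ)^2)^e = (2:ℝ)^(-e) * (2 * (1 + (n:ℝ)^2)) ^ e := by rw [h4, h5]
      _ ≤ (2:ℝ)^(-e) * (((n:ℝ)+1)^2) ^ e := by
          exact mul_le_mul_of_nonneg_left h3 (by positivity)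
  refine Summable.of_nat_of_neg (by simpa using hnat) (by simpa using hnat)

/-- Cauchy–Schwarz for infinite sums of nonnegative reals. -/
private lemma tsum_cauchy_schwarz (a b : ℤ → ℝ) (ha0 : ∀ k, 0 ≤ a k) (hb0 : ∀ k, 0 ≤ b k)
    (ha : Summable (fun k => a k ^ 2)) (hb : Summable (fun k => b k ^ 2)) :
    (∑' k, a k * b k) ^ 2 ≤ (∑' k, a k ^ 2) * (∑' k, b k ^ 2) := by
  set P := ∑' k, a k ^ 2 with hP
  set Q := ∑' k, b k ^ 2 with hQ
  have hP0 : 0 ≤ P := tsum_nonneg fun k => sq_nonneg _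
  have hQ0 : 0 ≤ Q := tsum_nonneg fun k => sq_nonneg _
  have key : ∀ S : Finset ℤ, ∑ k ∈ S, a k * b k ≤ Real.sqrt (P * Q) := by
    intro S
    have h := Finset.sum_mul_sq_le_sq_mul_sq S a b
    have hPle : ∑ k ∈ S, a k ^ 2 ≤ P := Summable.sum_le_tsum S (fun k _ => sq_nonneg _) ha
    have hQle : ∑ k ∈ S, b k ^ 2 ≤ Q := Summable.sum_le_tsum S (fun k _ => sq_nonneg _) hb
    have h2 : (∑ k ∈ S, a k * b k) ^ 2 ≤ P * Q :=
      h.trans (mul_le_mul hPle hQle (Finset.sum_nonneg fun k _ => sq_nonneg _) hP0)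
    calc ∑ k ∈ S, a k * b k ≤ Real.sqrt ((∑ k ∈ S, a k * b k)^2) := by
          rw [Real.sqrt_sq_eq_abs]; exact le_abs_self _
      _ ≤ Real.sqrt (P * Q) := Real.sqrt_le_sqrt h2
  have h3 : ∑' k, a k * b k ≤ Real.sqrt (P * Q) :=
    tsum_le_of_sum_le' (Real.sqrt_nonneg _) key
  have h4 : 0 ≤ ∑' k, a k * b k := tsum_nonneg fun k => mul_nonneg (ha0 k) (hb0 k)
  calc (∑' k, a k * b k) ^ 2 ≤ Real.sqrt (P * Q) ^ 2 := pow_le_pow_left₀ h4 h3 2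
    _ = P * Q := Real.sq_sqrt (mul_nonneg hP0 hQ0)

/-- Kernel bound. -/
private lemma kernel_bound (s r t : ℝ) (ht0 : 0 ≤ t) (htr : t ≤ r) (k m : ℤ) :
    (1+(k:ℝ)^2)^(s-1) * (1+((k-m:ℤ):ℝ)^2)^(-r)
      ≤ 2^t * (1+(m:ℝ)^2)^t * (1+(k:ℝ)^2)^(s-1-t) := by
  set x := 1+(k:ℝ)^2 with hx
  set y := 1+(m:ℝ)^2 with hy
  set z := 1+((k-m:ℤ):ℝ)^2 with hz
  have hx1 : (1:ℝ) ≤ x := base_ge_one k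
  have hy1 : (1:ℝ) ≤ y := base_ge_one m
  have hz1 : (1:ℝ) ≤ z := base_ge_one (k-m)
  have hx0 : (0:ℝ) < x := by linarith
  have hy0 : (0:ℝ) < y := by linarith
  have hz0 : (0:ℝ) < z := by linarith
  have h1 : z^(-r) ≤ z^(-t) := Real.rpow_le_rpow_of_exponent_le hz1 (by linarith)
  have hxyz : x ≤ 2 * y * z := by
    have hc : ((k-m:ℤ):ℝ) = (k:ℝ) - (m:ℝ) := by push_cast; ring
    rw [hx, hy, hz, hc]
    nlinarith [sq_nonneg ((k:ℝ) - 2*(m:ℝ)), sq_nonneg ((k:ℝ)*(m:ℝ) - (m:ℝ)^2),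
      sq_nonneg ((k:ℝ) - (m:ℝ)), sq_nonneg (m:ℝ)]
  have h2 : x^t ≤ 2^t * y^t * z^t := by
    calc x^t ≤ (2*y*z)^t := Real.rpow_le_rpow (le_of_lt hx0) hxyz ht0
      _ = 2^t * y^t * z^t := by
          rw [Real.mul_rpow (by positivity) (le_of_lt hz0),
            Real.mul_rpow (by norm_num) (le_of_lt hy0)]
  have h3 : x^t * z^(-t) ≤ 2^t * y^t := by
    rw [Real.rpow_neg (le_of_lt hz0)]
    rw [mul_inv_le_iff₀ (Real.rpow_pos_of_pos hz0 t)]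
    linarith [h2]
  calc x^(s-1) * z^(-r) ≤ x^(s-1) * z^(-t) :=
        mul_le_mul_of_nonneg_left h1 (Real.rpow_nonneg (le_of_lt hx0) _)
    _ = x^(s-1-t) * (x^t * z^(-t)) := by
        rw [← mul_assoc, ← Real.rpow_add hx0]; ring_nf
    _ ≤ x^(s-1-t) * (2^t * y^t) :=
        mul_le_mul_of_nonneg_left h3 (Real.rpow_nonneg (le_of_lt hx0) _)
    _ = 2^t * y^t * x^(s-1-t) := by ring

/-- Bilinear smoothing estimate for the BBM nonlinearity on the torus, stated on the
Fourier side: for `0 ≤ r ≤ s`, `0 ≤ r' ≤ s` with `0 ≤ 2s - r - r' < 1/4`, there is a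
constant `c` such that `‖(1-∂x²)⁻¹∂x(wv)‖_{H^s} ≤ c ‖w‖_{H^r} ‖v‖_{H^{r'}}`
(stated with squared norms; the product has Fourier coefficients given by the
convolution `∑_j w_j v_{k-j}` and the operator multiplies the `k`-th coefficient by
`ik/(1+k²)`). -/
theorem bbm_bilinear_estimate (s r r' : ℝ)
    (hr : 0 ≤ r) (hr' : 0 ≤ r') (hrs : r ≤ s) (hr's : r' ≤ s)
    (hgap0 : 0 ≤ 2 * s - r - r') (hgap : 2 * s - r - r' < 1 / 4) :
    ∃ c > (0:ℝ), ∀ w v : ℤ → ℂ,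
      Summable (fun k : ℤ => (1 + (k : ℝ) ^ 2) ^ r * ‖w k‖ ^ 2) →
      Summable (fun k : ℤ => (1 + (k : ℝ) ^ 2) ^ r' * ‖v k‖ ^ 2) →
      (∑' k : ℤ, (1 + (k : ℝ) ^ 2) ^ s *
          ‖(Complex.I * (k : ℂ) / (1 + (k : ℂ) ^ 2)) * ∑' j : ℤ, w j * v (k - j)‖ ^ 2)
        ≤ c ^ 2 * (∑' k : ℤ, (1 + (k : ℝ) ^ 2) ^ r * ‖w k‖ ^ 2)
            * (∑' k : ℤ, (1 + (k : ℝ) ^ 2) ^ r' * ‖v k‖ ^ 2) := by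
  have hR : s - 1/4 < r := by linarith
  have hR' : s - 1/4 < r' := by linarith
  set t := min r r' with htdef
  have ht0 : 0 ≤ t := le_min hr hr'
  have htr : t ≤ r := min_le_left _ _
  have htr' : t ≤ r' := min_le_right _ _
  have hts : s - 1 - t < -(1/2) := by
    have := lt_min hR hR'
    simp only [← htdef] at this
    linarith
  have hK : Summable (fun k : ℤ => (1+(k:ℝ)^2)^(s-1-t)) := summable_int_rpow hts
  set K := ∑' k : ℤ, (1+(k:ℝ)^2)^(s-1-t) with hKdef
  have hK1 : (1:ℝ) ≤ K := by
    have h0 := Summable.sum_le_tsum ({0} : Finset ℤ)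
      (fun k _ => Real.rpow_nonneg (le_of_lt (base_pos k)) _) hK
    simpa using h0
  have hK0 : (0:ℝ) < K := lt_of_lt_of_le one_pos hK1
  have hc2pos : (0:ℝ) < 2^t * K := by positivity
  refine ⟨Real.sqrt (2^t * K), Real.sqrt_pos.2 hc2pos, ?_⟩
  intro w v hw hv
  rw [Real.sq_sqrt (le_of_lt hc2pos)]
  set P := ∑' k : ℤ, (1 + (k:ℝ)^2)^r * ‖w k‖^2 with hPdef
  set Q := ∑' k : ℤ, (1 + (k:ℝ)^2)^r' * ‖v k‖^2 with hQdef
  have hP0 : 0 ≤ P := tsum_nonneg fun k => by positivity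
  have hQ0 : 0 ≤ Q := tsum_nonneg fun k => by positivity
  -- basic summability
  have hw2 : Summable (fun k : ℤ => ‖w k‖^2) := by
    refine hw.of_nonneg_of_le (fun k => sq_nonneg _) (fun k => ?_)
    exact le_mul_of_one_le_left (sq_nonneg _) (Real.one_le_rpow (base_ge_one k) hr)
  have hv2 : Summable (fun k : ℤ => ‖v k‖^2) := by
    refine hv.of_nonneg_of_le (fun k => sq_nonneg _) (fun k => ?_)
    exact le_mul_of_one_le_left (sq_nonneg _) (Real.one_le_rpow (base_ge_one k) hr')
  have hvshift : ∀ k : ℤ, Summable (fun j : ℤ => ‖v (k - j)‖^2) := by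
    intro k
    have := (Equiv.subLeft k).summable_iff.mpr hv2
    simpa [Function.comp_def] using this
  have habs : ∀ k : ℤ, Summable (fun j : ℤ => ‖w j‖ * ‖v (k - j)‖) := by
    intro k
    refine Summable.of_nonneg_of_le (fun j => mul_nonneg (norm_nonneg _) (norm_nonneg _))
      (fun j => ?_) ((hw2.add (hvshift k)).div_const 2)
    nlinarith [sq_nonneg (‖w j‖ - ‖v (k - j)‖)]
  -- weight functions
  set W : ℤ → ℤ → ℝ := fun k m => (1+((k-m:ℤ):ℝ)^2)^(-r) * ‖v m‖^2 with hWdef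
  have hWnonneg : ∀ k m, 0 ≤ W k m := fun k m => by
    exact mul_nonneg (Real.rpow_nonneg (le_of_lt (base_pos _)) _) (sq_nonneg _)
  have hWle : ∀ k m, W k m ≤ ‖v m‖^2 := by
    intro k m
    exact mul_le_of_le_one_left (sq_nonneg _)
      (Real.rpow_le_one_of_one_le_of_nonpos (base_ge_one _) (neg_nonpos.2 hr))
  have hWsum : ∀ k : ℤ, Summable (W k) := fun k =>
    Summable.of_nonneg_of_le (hWnonneg k) (hWle k) hv2
  -- Cauchy-Schwarz step
  have hconv : ∀ k : ℤ, ‖∑' j : ℤ, w j * v (k - j)‖^2 ≤ P * ∑' m, W k m := by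
    intro k
    have h1 : ‖∑' j : ℤ, w j * v (k - j)‖ ≤ ∑' j : ℤ, ‖w j‖ * ‖v (k - j)‖ := by
      calc ‖∑' j : ℤ, w j * v (k - j)‖ ≤ ∑' j : ℤ, ‖w j * v (k - j)‖ :=
            norm_tsum_le_tsum_norm (by simpa [norm_mul] using habs k)
        _ = ∑' j : ℤ, ‖w j‖ * ‖v (k - j)‖ := by simp [norm_mul]
    set a : ℤ → ℝ := fun j => (1+(j:ℝ)^2)^(r/2) * ‖w j‖ with hadef
    set b : ℤ → ℝ := fun j => (1+(j:ℝ)^2)^(-(r/2)) * ‖v (k - j)‖ with hbdef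
    have ha2 : (fun j => a j ^ 2) = fun j : ℤ => (1+(j:ℝ)^2)^r * ‖w j‖^2 := by
      funext j
      rw [hadef, mul_pow, sq ((1+(j:ℝ)^2)^(r/2)), ← Real.rpow_add (base_pos j), add_halves]
    have hb2 : (fun j => b j ^ 2) = fun j : ℤ => (1+(j:ℝ)^2)^(-r) * ‖v (k - j)‖^2 := by
      funext j
      rw [hbdef, mul_pow, sq ((1+(j:ℝ)^2)^(-(r/2))), ← Real.rpow_add (base_pos j),
        show -(r/2) + -(r/2) = -r by ring]
    have hab : (fun j => a j * b j) = fun j : ℤ => ‖w j‖ * ‖v (k - j)‖ := by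
      funext j
      rw [hadef, hbdef]
      have : (1+(j:ℝ)^2)^(r/2) * (1+(j:ℝ)^2)^(-(r/2)) = 1 := by
        rw [← Real.rpow_add (base_pos j)]; norm_num
      calc (1+(j:ℝ)^2)^(r/2) * ‖w j‖ * ((1+(j:ℝ)^2)^(-(r/2)) * ‖v (k - j)‖)
          = ((1+(j:ℝ)^2)^(r/2) * (1+(j:ℝ)^2)^(-(r/2))) * (‖w j‖ * ‖v (k - j)‖) := by ring
        _ = ‖w j‖ * ‖v (k - j)‖ := by rw [this, one_mul]
    have hsa : Summable (fun j => a j ^ 2) := by rw [ha2]; exact hw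
    have hsb : Summable (fun j => b j ^ 2) := by
      rw [hb2]
      refine Summable.of_nonneg_of_le (fun j => by positivity) (fun j => ?_) (hvshift k)
      exact mul_le_of_le_one_left (sq_nonneg _)
        (Real.rpow_le_one_of_one_le_of_nonpos (base_ge_one _) (neg_nonpos.2 hr))
    have hcs := tsum_cauchy_schwarz a b
      (fun j => mul_nonneg (Real.rpow_nonneg (le_of_lt (base_pos _)) _) (norm_nonneg _))
      (fun j => mul_nonneg (Real.rpow_nonneg (le_of_lt (base_pos _)) _) (norm_nonneg _))
      hsa hsb
    rw [hab, ha2, hb2] at hcs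
    have hUW : ∑' j : ℤ, (1+(j:ℝ)^2)^(-r) * ‖v (k - j)‖^2 = ∑' m, W k m := by
      rw [← Equiv.tsum_eq (Equiv.subLeft k) (fun j : ℤ => (1+(j:ℝ)^2)^(-r) * ‖v (k - j)‖^2)]
      refine tsum_congr fun m => ?_
      simp [hWdef, Equiv.subLeft, sub_sub_cancel]
    rw [hUW] at hcs
    calc ‖∑' j : ℤ, w j * v (k - j)‖^2 ≤ (∑' j : ℤ, ‖w j‖ * ‖v (k - j)‖)^2 :=
          pow_le_pow_left₀ (norm_nonneg _) h1 2
      _ ≤ P * ∑' m, W k m := hcs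
  -- multiplier bound
  have hterm : ∀ k : ℤ,
      (1 + (k:ℝ)^2)^s * ‖(Complex.I * (k:ℂ) / (1 + (k:ℂ)^2)) * ∑' j : ℤ, w j * v (k - j)‖^2
        ≤ (1 + (k:ℝ)^2)^(s-1) * (P * ∑' m, W k m) := by
    intro k
    have hmult : ‖Complex.I * (k:ℂ) / (1 + (k:ℂ)^2)‖ = |(k:ℝ)| / (1 + (k:ℝ)^2) := by
      have h1 : ((1:ℂ) + (k:ℂ)^2) = (((1+(k:ℝ)^2 : ℝ)):ℂ) := by push_cast; ring
      have h2 : ((k:ℂ)) = (((k:ℝ):ℂ)) := by push_cast; ring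
      rw [h1, h2, norm_div, norm_mul, Complex.norm_I, one_mul, Complex.norm_real,
        Complex.norm_real, Real.norm_eq_abs, Real.norm_eq_abs, abs_of_pos (base_pos k)]
    have hsplit : (1 + (k:ℝ)^2)^s * (|(k:ℝ)| / (1 + (k:ℝ)^2))^2 ≤ (1 + (k:ℝ)^2)^(s-1) := by
      have e1 : (1 + (k:ℝ)^2)^(s-1) = (1 + (k:ℝ)^2)^s * ((1 + (k:ℝ)^2))⁻¹ := by
        rw [show s - 1 = s + (-1) by ring, Real.rpow_add (base_pos k), Real.rpow_neg_one]
      rw [e1]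
      refine mul_le_mul_of_nonneg_left ?_ (Real.rpow_nonneg (le_of_lt (base_pos k)) _)
      rw [div_pow, sq_abs]
      rw [div_le_iff₀ (by positivity)]
      have hb := base_pos k
      have he2 : (1 + (k:ℝ)^2)⁻¹ * (1 + (k:ℝ)^2)^2 = 1 + (k:ℝ)^2 := by
        field_simp
      rw [he2]
      nlinarith [sq_nonneg (k:ℝ)]
    calc (1 + (k:ℝ)^2)^s * ‖(Complex.I * (k:ℂ) / (1 + (k:ℂ)^2)) * ∑' j : ℤ, w j * v (k - j)‖^2
        = ((1 + (k:ℝ)^2)^s * (|(k:ℝ)| / (1 + (k:ℝ)^2))^2) * ‖∑' j : ℤ, w j * v (k - j)‖^2 := by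
          rw [norm_mul, hmult, mul_pow]; ring
      _ ≤ (1 + (k:ℝ)^2)^(s-1) * (P * ∑' m, W k m) := by
          refine mul_le_mul hsplit (hconv k) (sq_nonneg _) (Real.rpow_nonneg (le_of_lt (base_pos k)) _)
  -- main estimate via finite partial sums
  refine tsum_le_of_sum_le' (by positivity) ?_
  intro S
  have hsumW : ∀ k ∈ S, Summable (fun m => (1+(k:ℝ)^2)^(s-1) * W k m) :=
    fun k _ => (hWsum k).mul_left _
  have hinner : ∀ m : ℤ, ∑ k ∈ S, (1+(k:ℝ)^2)^(s-1) * W k m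
      ≤ 2^t * K * ((1 + (m:ℝ)^2)^r' * ‖v m‖^2) := by
    intro m
    have step1 : ∀ k : ℤ, (1+(k:ℝ)^2)^(s-1) * W k m
        ≤ (2^t * (1+(m:ℝ)^2)^t * ‖v m‖^2) * (1+(k:ℝ)^2)^(s-1-t) := by
      intro k
      have hker := kernel_bound s r t ht0 htr k m
      calc (1+(k:ℝ)^2)^(s-1) * W k m
          = ((1+(k:ℝ)^2)^(s-1) * (1+((k-m:ℤ):ℝ)^2)^(-r)) * ‖v m‖^2 := by
            rw [hWdef]; ring
        _ ≤ (2^t * (1+(m:ℝ)^2)^t * (1+(k:ℝ)^2)^(s-1-t)) * ‖v m‖^2 :=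
            mul_le_mul_of_nonneg_right hker (sq_nonneg _)
        _ = (2^t * (1+(m:ℝ)^2)^t * ‖v m‖^2) * (1+(k:ℝ)^2)^(s-1-t) := by ring
    calc ∑ k ∈ S, (1+(k:ℝ)^2)^(s-1) * W k m
        ≤ ∑ k ∈ S, (2^t * (1+(m:ℝ)^2)^t * ‖v m‖^2) * (1+(k:ℝ)^2)^(s-1-t) :=
          Finset.sum_le_sum fun k _ => step1 k
      _ = (2^t * (1+(m:ℝ)^2)^t * ‖v m‖^2) * ∑ k ∈ S, (1+(k:ℝ)^2)^(s-1-t) := by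
          rw [Finset.mul_sum]
      _ ≤ (2^t * (1+(m:ℝ)^2)^t * ‖v m‖^2) * K := by
          refine mul_le_mul_of_nonneg_left
            (Summable.sum_le_tsum S (fun k _ => Real.rpow_nonneg (le_of_lt (base_pos k)) _) hK) ?_
          positivity
      _ ≤ 2^t * K * ((1 + (m:ℝ)^2)^r' * ‖v m‖^2) := by
          have h5 : (1+(m:ℝ)^2)^t ≤ (1+(m:ℝ)^2)^r' :=
            Real.rpow_le_rpow_of_exponent_le (base_ge_one m) htr'
          have h6 : (1+(m:ℝ)^2)^t * ‖v m‖^2 ≤ (1+(m:ℝ)^2)^r' * ‖v m‖^2 :=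
            mul_le_mul_of_nonneg_right h5 (sq_nonneg _)
          calc 2^t * (1+(m:ℝ)^2)^t * ‖v m‖^2 * K
              = (2^t * K) * ((1+(m:ℝ)^2)^t * ‖v m‖^2) := by ring
            _ ≤ (2^t * K) * ((1+(m:ℝ)^2)^r' * ‖v m‖^2) :=
                mul_le_mul_of_nonneg_left h6 (by positivity)
  calc ∑ k ∈ S, (1 + (k:ℝ)^2)^s *
        ‖(Complex.I * (k:ℂ) / (1 + (k:ℂ)^2)) * ∑' j : ℤ, w j * v (k - j)‖^2
      ≤ ∑ k ∈ S, (1 + (k:ℝ)^2)^(s-1) * (P * ∑' m, W k m) :=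
        Finset.sum_le_sum fun k _ => hterm k
    _ = P * ∑ k ∈ S, ∑' m, (1+(k:ℝ)^2)^(s-1) * W k m := by
        rw [Finset.mul_sum]
        refine Finset.sum_congr rfl fun k _ => ?_
        rw [tsum_mul_left]; ring
    _ = P * ∑' m, ∑ k ∈ S, (1+(k:ℝ)^2)^(s-1) * W k m := by
        rw [Summable.tsum_finsetSum hsumW]
    _ ≤ P * ∑' m : ℤ, 2^t * K * ((1 + (m:ℝ)^2)^r' * ‖v m‖^2) := by
        refine mul_le_mul_of_nonneg_left ?_ hP0
        refine Summable.tsum_le_tsum hinner (summable_sum hsumW) (hv.mul_left _)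
    _ = P * (2^t * K * Q) := by
        congr 1
        rw [hQdef]
        exact tsum_mul_left
    _ = 2^t * K * P * Q := by ring
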